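/- For an integer a, define Y_a : ℝ → ℂ by Y_a(ξ) = −∫_{−1/2+ξ/2}^{1/2−ξ/2} e^{2πiax} dx − ∫_{7/8−ξ/4}^{7/8+ξ/4} e^{2πiax} dx − ∫_{−7/8−ξ/4}^{−7/8+ξ/4} e^{2πiax} dx. Then for every integer p ≥ 1, the p-th derivative of Y_a at ξ = 0 equals ((1 − (−1)^p)/2) · (iπa)^{p−1} · [ (−1)^a − (e^{iπa/4} + e^{−iπa/4})/2^p ], with the convention (iπa)^0 = 1 (including when a = 0). -/

import Mathlib

open Complex

lemma vec6_val0 (v0 v1 v2 v3 v4 v5 : ℂ) : (![v0,v1,v2,v3,v4,v5] : Fin 6 → ℂ) 0 = v0 := rfl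
lemma vec6_val1 (v0 v1 v2 v3 v4 v5 : ℂ) : (![v0,v1,v2,v3,v4,v5] : Fin 6 → ℂ) 1 = v1 := rfl
lemma vec6_val2 (v0 v1 v2 v3 v4 v5 : ℂ) : (![v0,v1,v2,v3,v4,v5] : Fin 6 → ℂ) 2 = v2 := rfl
lemma vec6_val3 (v0 v1 v2 v3 v4 v5 : ℂ) : (![v0,v1,v2,v3,v4,v5] : Fin 6 → ℂ) 3 = v3 := rfl
lemma vec6_val4 (v0 v1 v2 v3 v4 v5 : ℂ) : (![v0,v1,v2,v3,v4,v5] : Fin 6 → ℂ) 4 = v4 := rfl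
lemma vec6_val5 (v0 v1 v2 v3 v4 v5 : ℂ) : (![v0,v1,v2,v3,v4,v5] : Fin 6 → ℂ) 5 = v5 := rfl

lemma iteratedDeriv_expsum {n : ℕ} (L : Fin n → ℂ) (p : ℕ) :
    ∀ (A : Fin n → ℂ) (x : ℝ),
    iteratedDeriv p (fun ξ : ℝ => ∑ i, A i * Complex.exp (L i * ξ)) x
      = ∑ i, A i * L i ^ p * Complex.exp (L i * x) := by
  induction p with
  | zero => intro A x; simp
  | succ q ih =>
    intro A x
    rw [iteratedDeriv_succ']
    have hd : deriv (fun ξ : ℝ => ∑ i, A i * Complex.exp (L i * ξ))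
        = fun ξ : ℝ => ∑ i, (A i * L i) * Complex.exp (L i * ξ) := by
      funext ξ
      have h : ∀ i : Fin n, HasDerivAt (fun t : ℝ => A i * Complex.exp (L i * t))
          ((A i * L i) * Complex.exp (L i * ξ)) ξ := by
        intro i
        have h0 : HasDerivAt (fun t : ℝ => L i * (t : ℂ)) (L i) ξ := by
          simpa using (Complex.ofRealCLM.hasDerivAt (x := ξ)).const_mul (L i)
        have := (h0.cexp).const_mul (A i)
        exact this.congr_deriv (by ring)
      exact (HasDerivAt.fun_sum (fun i (_ : i ∈ Finset.univ) => h i)).deriv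
    rw [hd, ih]
    exact Finset.sum_congr rfl (fun i _ => by ring)

set_option maxRecDepth 10000 in
theorem trajectory2_moment_derivatives (a : ℤ) (Ya : ℝ → ℂ)
    (hY : ∀ ξ : ℝ, Ya ξ =
      -(∫ x in (-1/2 + ξ/2 : ℝ)..(1/2 - ξ/2 : ℝ),
          Complex.exp (2 * Real.pi * I * (a : ℂ) * (x : ℂ)))
      - (∫ x in (7/8 - ξ/4 : ℝ)..(7/8 + ξ/4 : ℝ),
          Complex.exp (2 * Real.pi * I * (a : ℂ) * (x : ℂ)))
      - (∫ x in (-7/8 - ξ/4 : ℝ)..(-7/8 + ξ/4 : ℝ),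
          Complex.exp (2 * Real.pi * I * (a : ℂ) * (x : ℂ)))) :
    ∀ p : ℕ, 1 ≤ p →
      iteratedDeriv p Ya 0 =
        (1 - (-1 : ℂ) ^ p) / 2 * (I * Real.pi * (a : ℂ)) ^ (p - 1) *
          ((-1 : ℂ) ^ a -
            (Complex.exp (I * Real.pi * (a : ℂ) / 4)
              + Complex.exp (-(I * Real.pi * (a : ℂ)) / 4)) / 2 ^ p) := by
  intro p hp
  obtain ⟨q, rfl⟩ : ∃ q, p = q + 1 := ⟨p - 1, (Nat.succ_pred_eq_of_pos hp).symm⟩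
  by_cases ha : a = 0
  · subst ha
    have hconst : Ya = fun _ => (-1 : ℂ) := by
      funext ξ
      rw [hY ξ]
      simp only [Int.cast_zero, mul_zero, zero_mul, Complex.exp_zero,
        intervalIntegral.integral_const, Complex.real_smul, mul_one]
      push_cast
      ring
    rw [hconst]
    have hz : iteratedDeriv (q + 1) (fun _ : ℝ => (-1 : ℂ)) 0 = 0 := by
      rw [iteratedDeriv_succ', deriv_const']
      clear hY hp
      induction q with
      | zero => simp
      | succ k ih => rw [iteratedDeriv_succ', deriv_const']; exact ih
    rw [hz]
    simp only [Int.cast_zero, mul_zero, zero_div, Complex.exp_zero, neg_zero, zpow_zero]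
    rcases q with _ | k
    · norm_num
    · rw [zero_pow (by omega : k + 1 + 1 - 1 ≠ 0)]
      ring
  · set c : ℂ := 2 * Real.pi * I * (a : ℂ) with hc_def
    have hc : c ≠ 0 := by
      apply mul_ne_zero (mul_ne_zero (mul_ne_zero two_ne_zero ?_) I_ne_zero)
      · exact_mod_cast Int.cast_ne_zero.mpr ha
      · exact_mod_cast Real.pi_ne_zero
    have hfun : Ya = fun ξ : ℝ => ∑ i : Fin 6,
        (![-(Complex.exp (c/2))/c, Complex.exp (-(c/2))/c,
           -(Complex.exp (c*7/8))/c, Complex.exp (c*7/8)/c,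
           -(Complex.exp (-(c*7/8)))/c, Complex.exp (-(c*7/8))/c] : Fin 6 → ℂ) i
          * Complex.exp ((![-(c/2), c/2, c/4, -(c/4), c/4, -(c/4)] : Fin 6 → ℂ) i * ξ) := by
      funext ξ
      rw [hY ξ, integral_exp_mul_complex hc, integral_exp_mul_complex hc,
        integral_exp_mul_complex hc, Fin.sum_univ_six]
      simp only [vec6_val0, vec6_val1, vec6_val2, vec6_val3, vec6_val4, vec6_val5]
      push_cast
      rw [show c * ((1:ℂ)/2 - ↑ξ/2) = c/2 + -(c/2) * ↑ξ by ring,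
        show c * (-(1:ℂ)/2 + ↑ξ/2) = -(c/2) + c/2 * ↑ξ by ring,
        show c * ((7:ℂ)/8 + ↑ξ/4) = c*7/8 + c/4 * ↑ξ by ring,
        show c * ((7:ℂ)/8 - ↑ξ/4) = c*7/8 + -(c/4) * ↑ξ by ring,
        show c * (-(7:ℂ)/8 + ↑ξ/4) = -(c*7/8) + c/4 * ↑ξ by ring,
        show c * (-(7:ℂ)/8 - ↑ξ/4) = -(c*7/8) + -(c/4) * ↑ξ by ring]
      simp only [Complex.exp_add]
      ring
    rw [hfun, iteratedDeriv_expsum, Fin.sum_univ_six]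
    simp only [vec6_val0, vec6_val1, vec6_val2, vec6_val3, vec6_val4, vec6_val5,
      Complex.ofReal_zero, mul_zero, Complex.exp_zero, mul_one]
    have e1 : Complex.exp (c/2) = (-1 : ℂ) ^ a := by
      rw [show c/2 = (a : ℂ) * (Real.pi * I) by rw [hc_def]; ring, Complex.exp_int_mul,
        Complex.exp_pi_mul_I]
    have e1' : Complex.exp (-(c/2)) = (-1 : ℂ) ^ a := by
      rw [show -(c/2) = ((-a : ℤ) : ℂ) * (Real.pi * I) by push_cast; rw [hc_def]; ring,
        Complex.exp_int_mul, Complex.exp_pi_mul_I, zpow_neg, ← inv_zpow, inv_neg, inv_one]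
    have e2 : Complex.exp (c*7/8) = Complex.exp (-(I * Real.pi * (a:ℂ)) / 4) := by
      rw [show c*7/8 = (a:ℂ) * (2 * Real.pi * I) + -(I * Real.pi * (a:ℂ)) / 4 by
        rw [hc_def]; ring, Complex.exp_add, Complex.exp_int_mul_two_pi_mul_I, one_mul]
    have e3 : Complex.exp (-(c*7/8)) = Complex.exp (I * Real.pi * (a:ℂ) / 4) := by
      rw [show -(c*7/8) = ((-a : ℤ):ℂ) * (2 * Real.pi * I) + I * Real.pi * (a:ℂ) / 4 by
        push_cast; rw [hc_def]; ring, Complex.exp_add, Complex.exp_int_mul_two_pi_mul_I, one_mul]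
    rw [e1, e1', e2, e3,
      show (I * (Real.pi:ℂ) * (a:ℂ)) = c/2 by rw [hc_def]; ring,
      show q + 1 - 1 = q from rfl]
    clear hY hfun
    clear_value c
    rw [neg_pow (c/2), neg_pow (c/4)]
    simp only [div_pow]
    rw [show ((4:ℂ))^(q+1) = 2^(q+1) * 2^(q+1) by rw [← mul_pow]; norm_num,
      pow_succ (-1:ℂ) q, pow_succ (2:ℂ) q, pow_succ c q]
    have h2q : ((2:ℂ))^q ≠ 0 := pow_ne_zero q two_ne_zero
    have hcq : c^q ≠ 0 := pow_ne_zero q hc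
    generalize ((-1:ℂ))^q = X
    generalize hT : ((2:ℂ))^q = T at h2q ⊢
    generalize hC : c^q = C at hcq ⊢
    have hT2 : (T * 2 : ℂ) ≠ 0 := mul_ne_zero h2q two_ne_zero
    have hB : (c * (T * 2 * (T * 2)) : ℂ) ≠ 0 := mul_ne_zero hc (mul_ne_zero hT2 hT2)
    field_simp
    ring
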